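/- Let K be a 2n×2n real symmetric positive definite matrix and Ω the standard symplectic form, and define γ_K^# := K # (Ω K^{-1} Ωᵀ) (geometric mean). Then: (i) there exists a symplectic matrix S with γ_K^# = S Sᵀ; in particular γ_K^# is a pure quantum covariance matrix. (ii) The following three conditions are equivalent: the complex Hermitian matrix K − iΩ is positive definite; K − Ω K^{-1} Ωᵀ is positive definite; K − γ_K^# is positive definite. -/

import Mathlib

set_option linter.unusedSectionVars false


open Matrix ComplexOrder

/-- The standard symplectic form on `n` modes: the `2n × 2n` block-diagonal matrix
`⊕_{i=1}^n [[0, 1], [−1, 0]]`. -/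
noncomputable def Omega (n : ℕ) : Matrix (Fin 2 × Fin n) (Fin 2 × Fin n) ℝ :=
  Matrix.blockDiagonal fun _ : Fin n => !![(0 : ℝ), 1; -1, 0]

/-- Real power of a Hermitian (real symmetric) matrix via the spectral decomposition
(junk value `0` on non-Hermitian matrices). -/
noncomputable def rpowMat {ι : Type} [Fintype ι] [DecidableEq ι]
    (M : Matrix ι ι ℝ) (t : ℝ) : Matrix ι ι ℝ :=
  if h : M.IsHermitian then
    (h.eigenvectorUnitary : Matrix ι ι ℝ) *
      Matrix.diagonal (fun i => h.eigenvalues i ^ t) *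
      star (h.eigenvectorUnitary : Matrix ι ι ℝ)
  else 0

/-- The geometric mean `M # N := M^{1/2} (M^{-1/2} N M^{-1/2})^{1/2} M^{1/2}` of positive
definite matrices. -/
noncomputable def geomMean {ι : Type} [Fintype ι] [DecidableEq ι]
    (M N : Matrix ι ι ℝ) : Matrix ι ι ℝ :=
  rpowMat M (1 / 2) *
    rpowMat (rpowMat M (-(1 / 2)) * N * rpowMat M (-(1 / 2))) (1 / 2) *
    rpowMat M (1 / 2)



variable {ι : Type} [Fintype ι] [DecidableEq ι]

section Conj
variable {𝕜 : Type*} [RCLike 𝕜]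

theorem myPosDefConj {A N : Matrix ι ι 𝕜} (hA : A.PosDef) (hN : IsUnit N) :
    (N * A * Nᴴ).PosDef := by
  have hNH : IsUnit Nᴴ := by
    rw [Matrix.isUnit_iff_isUnit_det] at hN ⊢
    rwa [Matrix.det_conjTranspose, isUnit_star]
  refine Matrix.PosDef.of_dotProduct_mulVec_pos ?_ (fun x hx => ?_)
  · show (N * A * Nᴴ)ᴴ = N * A * Nᴴ
    rw [conjTranspose_mul, conjTranspose_mul, conjTranspose_conjTranspose, hA.1.eq,
      Matrix.mul_assoc]
  · have hy : Nᴴ *ᵥ x ≠ 0 := by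
      intro h
      apply hx
      have := Matrix.mulVec_injective_iff_isUnit.mpr hNH
      apply this
      simpa using h
    have key : dotProduct (star x) ((N * A * Nᴴ) *ᵥ x)
        = dotProduct (star (Nᴴ *ᵥ x)) (A *ᵥ (Nᴴ *ᵥ x)) := by
      rw [star_mulVec, conjTranspose_conjTranspose, ← Matrix.mulVec_mulVec,
        ← Matrix.mulVec_mulVec, dotProduct_mulVec]
    rw [key]
    exact hA.dotProduct_mulVec_pos hy

theorem myPosDefConj_iff {A N : Matrix ι ι 𝕜} (hN : IsUnit N) :
    (N * A * Nᴴ).PosDef ↔ A.PosDef := by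
  constructor
  · intro h
    have h2 := myPosDefConj h ((Matrix.isUnit_nonsing_inv_iff).mpr hN)
    have hNH : IsUnit Nᴴ := by
      rw [Matrix.isUnit_iff_isUnit_det] at hN ⊢
      rwa [Matrix.det_conjTranspose, isUnit_star]
    have : N⁻¹ * (N * A * Nᴴ) * N⁻¹ᴴ = A := by
      rw [conjTranspose_nonsing_inv]
      calc N⁻¹ * (N * A * Nᴴ) * Nᴴ⁻¹ = (N⁻¹ * N) * A * (Nᴴ * Nᴴ⁻¹) := by
            simp only [Matrix.mul_assoc]
        _ = A := by rw [Matrix.nonsing_inv_mul _ (Matrix.isUnit_iff_isUnit_det _ |>.mp hN),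
            Matrix.mul_nonsing_inv _ (Matrix.isUnit_iff_isUnit_det _ |>.mp hNH),
            Matrix.one_mul, Matrix.mul_one]
    rwa [this] at h2
  · exact fun h => myPosDefConj h hN

end Conj


theorem rpowMat_eq {M : Matrix ι ι ℝ} (h : M.IsHermitian) (t : ℝ) :
    rpowMat M t = (h.eigenvectorUnitary : Matrix ι ι ℝ) *
      Matrix.diagonal (fun i => h.eigenvalues i ^ t) *
      star (h.eigenvectorUnitary : Matrix ι ι ℝ) := dif_pos h

theorem rpowMat_isHermitian {M : Matrix ι ι ℝ} (h : M.IsHermitian) (t : ℝ) :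
    (rpowMat M t).IsHermitian := by
  rw [rpowMat_eq h t]
  show _ᴴ = _
  simp [conjTranspose_mul, Matrix.diagonal_conjTranspose, Matrix.mul_assoc,
    Matrix.star_eq_conjTranspose]

theorem rpowMat_mul {M : Matrix ι ι ℝ} (hM : M.PosDef) (s t : ℝ) :
    rpowMat M s * rpowMat M t = rpowMat M (s + t) := by
  have hU : star (hM.1.eigenvectorUnitary : Matrix ι ι ℝ) *
      (hM.1.eigenvectorUnitary : Matrix ι ι ℝ) = 1 :=
    Matrix.mem_unitaryGroup_iff'.mp (hM.1.eigenvectorUnitary).2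
  rw [rpowMat_eq hM.1, rpowMat_eq hM.1, rpowMat_eq hM.1]
  set U := (hM.1.eigenvectorUnitary : Matrix ι ι ℝ)
  calc U * Matrix.diagonal (fun i => hM.1.eigenvalues i ^ s) * star U *
        (U * Matrix.diagonal (fun i => hM.1.eigenvalues i ^ t) * star U)
      = U * (Matrix.diagonal (fun i => hM.1.eigenvalues i ^ s) * ((star U * U) *
          Matrix.diagonal (fun i => hM.1.eigenvalues i ^ t))) * star U := by
        simp only [Matrix.mul_assoc]
    _ = U * Matrix.diagonal (fun i => hM.1.eigenvalues i ^ (s + t)) * star U := by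
        rw [hU, Matrix.one_mul, Matrix.diagonal_mul_diagonal]
        have : (fun i => hM.1.eigenvalues i ^ s * hM.1.eigenvalues i ^ t)
            = fun i => hM.1.eigenvalues i ^ (s + t) :=
          funext fun i => (Real.rpow_add (hM.eigenvalues_pos i) s t).symm
        rw [this]
    _ = _ := by simp only [Matrix.mul_assoc]

theorem rpowMat_zero {M : Matrix ι ι ℝ} (h : M.IsHermitian) : rpowMat M 0 = 1 := by
  rw [rpowMat_eq h]
  simp only [Real.rpow_zero]
  rw [Matrix.diagonal_one, Matrix.mul_one]
  exact Matrix.mem_unitaryGroup_iff.mp (h.eigenvectorUnitary).2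

theorem rpowMat_one {M : Matrix ι ι ℝ} (h : M.IsHermitian) : rpowMat M 1 = M := by
  rw [rpowMat_eq h]
  simp only [Real.rpow_one]
  have := h.spectral_theorem.symm
  simpa [Function.comp] using this

theorem rpowMat_posDef {M : Matrix ι ι ℝ} (hM : M.PosDef) (t : ℝ) :
    (rpowMat M t).PosDef := by
  rw [rpowMat_eq hM.1]
  have hU : IsUnit (hM.1.eigenvectorUnitary : Matrix ι ι ℝ) :=
    ⟨⟨_, star (hM.1.eigenvectorUnitary : Matrix ι ι ℝ),
      Matrix.mem_unitaryGroup_iff.mp (hM.1.eigenvectorUnitary).2,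
      Matrix.mem_unitaryGroup_iff'.mp (hM.1.eigenvectorUnitary).2⟩, rfl⟩
  rw [Matrix.star_eq_conjTranspose]
  exact myPosDefConj (Matrix.PosDef.diagonal fun i =>
    Real.rpow_pos_of_pos (hM.eigenvalues_pos i) t) hU

theorem rpowMat_mul_neg {M : Matrix ι ι ℝ} (hM : M.PosDef) (t : ℝ) :
    rpowMat M t * rpowMat M (-t) = 1 := by
  rw [rpowMat_mul hM, add_neg_cancel, rpowMat_zero hM.1]

theorem rpowMat_half_mul_self {M : Matrix ι ι ℝ} (hM : M.PosDef) :
    rpowMat M (1/2) * rpowMat M (1/2) = M := by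
  rw [rpowMat_mul hM]
  norm_num
  exact rpowMat_one hM.1

open scoped MatrixOrder in
theorem eq_rpowMat_half {X M : Matrix ι ι ℝ} (hX : X.PosDef) (hM : M.PosDef)
    (h : X * X = M) : X = rpowMat M (1/2) :=
  (CFC.sq_eq_sq_iff _ _ hX.posSemidef.nonneg (rpowMat_posDef hM (1/2)).posSemidef.nonneg).mp
    (by rw [pow_two, pow_two, h, rpowMat_half_mul_self hM])
theorem matIsUnit {𝕜 : Type*} [Field 𝕜] {A B : Matrix ι ι 𝕜} (h : A * B = 1) : IsUnit A :=
  ⟨⟨A, B, h, mul_eq_one_comm.mp h⟩, rfl⟩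

section GM

variable {A B : Matrix ι ι ℝ} (hA : A.PosDef) (hB : B.PosDef)

theorem inner_posDef (hA : A.PosDef) (hB : B.PosDef) :
    (rpowMat A (-(1 / 2)) * B * rpowMat A (-(1 / 2))).PosDef := by
  have h1 : rpowMat A (-(1/2)) * rpowMat A (1/2) = 1 := by
    rw [rpowMat_mul hA]; norm_num; exact rpowMat_zero hA.1
  have hsym := (rpowMat_isHermitian hA.1 (-(1/2))).eq
  rw [show rpowMat A (-(1 / 2)) * B * rpowMat A (-(1 / 2))
      = rpowMat A (-(1 / 2)) * B * (rpowMat A (-(1 / 2)))ᴴ by rw [hsym]]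
  exact myPosDefConj hB (matIsUnit h1)

theorem geomMean_posDef (hA : A.PosDef) (hB : B.PosDef) : (geomMean A B).PosDef := by
  have h1 : rpowMat A (1/2) * rpowMat A (-(1/2)) = 1 := rpowMat_mul_neg hA _
  have hsym := (rpowMat_isHermitian hA.1 (1/2)).eq
  unfold geomMean
  rw [show rpowMat A (1 / 2) *
      rpowMat (rpowMat A (-(1 / 2)) * B * rpowMat A (-(1 / 2))) (1 / 2) * rpowMat A (1 / 2)
      = rpowMat A (1 / 2) *
      rpowMat (rpowMat A (-(1 / 2)) * B * rpowMat A (-(1 / 2))) (1 / 2) *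
        (rpowMat A (1 / 2))ᴴ by rw [hsym]]
  exact myPosDefConj (rpowMat_posDef (inner_posDef hA hB) _) (matIsUnit h1)

theorem geomMean_riccati (hA : A.PosDef) (hB : B.PosDef) :
    geomMean A B * A⁻¹ * geomMean A B = B := by
  set R := rpowMat A (1/2) with hRdef
  set Ri := rpowMat A (-(1/2)) with hRidef
  have hRRi : R * Ri = 1 := rpowMat_mul_neg hA _
  have hRiR : Ri * R = 1 := by rw [hRidef, hRdef, rpowMat_mul hA]; norm_num; exact rpowMat_zero hA.1
  have hAinv : A⁻¹ = Ri * Ri := by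
    refine Matrix.inv_eq_right_inv ?_
    have : A = R * R := (rpowMat_half_mul_self hA).symm
    rw [this]
    calc R * R * (Ri * Ri) = R * ((R * Ri) * Ri) := by simp only [Matrix.mul_assoc]
      _ = 1 := by rw [hRRi, Matrix.one_mul, hRRi]
  set W := Ri * B * Ri with hWdef
  set T := rpowMat W (1/2) with hTdef
  have hTT : T * T = W := rpowMat_half_mul_self (inner_posDef hA hB)
  show R * T * R * A⁻¹ * (R * T * R) = B
  rw [hAinv]
  calc R * T * R * (Ri * Ri) * (R * T * R)
      = R * T * ((R * Ri) * ((Ri * R) * (T * R))) := by simp only [Matrix.mul_assoc]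
    _ = R * (T * T) * R := by
        rw [hRRi, hRiR, Matrix.one_mul, Matrix.one_mul]
        simp only [Matrix.mul_assoc]
    _ = R * (Ri * B * Ri) * R := by rw [hTT]
    _ = (R * Ri) * B * (Ri * R) := by simp only [Matrix.mul_assoc]
    _ = B := by rw [hRRi, hRiR, Matrix.one_mul, Matrix.mul_one]

theorem geomMean_unique (hA : A.PosDef) (hB : B.PosDef) {X : Matrix ι ι ℝ}
    (hX : X.PosDef) (h : X * A⁻¹ * X = B) : X = geomMean A B := by
  set R := rpowMat A (1/2) with hRdef
  set Ri := rpowMat A (-(1/2)) with hRidef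
  have hRRi : R * Ri = 1 := rpowMat_mul_neg hA _
  have hRiR : Ri * R = 1 := by rw [hRidef, hRdef, rpowMat_mul hA]; norm_num; exact rpowMat_zero hA.1
  have hAinv : A⁻¹ = Ri * Ri := by
    refine Matrix.inv_eq_right_inv ?_
    have : A = R * R := (rpowMat_half_mul_self hA).symm
    rw [this]
    calc R * R * (Ri * Ri) = R * ((R * Ri) * Ri) := by simp only [Matrix.mul_assoc]
      _ = 1 := by rw [hRRi, Matrix.one_mul, hRRi]
  have hRisym := (rpowMat_isHermitian hA.1 (-(1/2))).eq
  have hY : (Ri * X * Ri).PosDef := by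
    rw [show Ri * X * Ri = Ri * X * Riᴴ by rw [hRisym]]
    exact myPosDefConj hX (matIsUnit hRiR)
  have hYY : (Ri * X * Ri) * (Ri * X * Ri) = Ri * B * Ri := by
    calc Ri * X * Ri * (Ri * X * Ri) = Ri * (X * (Ri * Ri) * X) * Ri := by
          simp only [Matrix.mul_assoc]
      _ = Ri * B * Ri := by rw [← hAinv, h]
  have hYT : Ri * X * Ri = rpowMat (Ri * B * Ri) (1/2) :=
    eq_rpowMat_half hY (inner_posDef hA hB) hYY
  have : R * (Ri * X * Ri) * R = X := by
    calc R * (Ri * X * Ri) * R = (R * Ri) * X * (Ri * R) := by simp only [Matrix.mul_assoc]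
      _ = X := by rw [hRRi, hRiR, Matrix.one_mul, Matrix.mul_one]
  rw [← this, hYT]
  show R * rpowMat (Ri * B * Ri) (1/2) * R = geomMean A B
  unfold geomMean
  norm_num
  rfl

end GM
section Spectral
variable {𝕜 : Type*} [RCLike 𝕜]

theorem conj_diag_posDef_iff {U : Matrix ι ι 𝕜} (hU : U * Uᴴ = 1) (d : ι → 𝕜) :
    (U * Matrix.diagonal d * Uᴴ).PosDef ↔ ∀ i, 0 < d i := by
  rw [myPosDefConj_iff (matIsUnit hU), Matrix.posDef_diagonal_iff]

theorem one_sub_conj {U D : Matrix ι ι 𝕜} (hU : U * Uᴴ = 1) :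
    (1 : Matrix ι ι 𝕜) - U * D * Uᴴ = U * (1 - D) * Uᴴ := by
  rw [Matrix.mul_sub, Matrix.sub_mul, Matrix.mul_one, hU]

theorem one_add_conj {U D : Matrix ι ι 𝕜} (hU : U * Uᴴ = 1) :
    (1 : Matrix ι ι 𝕜) + U * D * Uᴴ = U * (1 + D) * Uᴴ := by
  rw [Matrix.mul_add, Matrix.add_mul, Matrix.mul_one, hU]

theorem conj_mul_conj {U D E : Matrix ι ι 𝕜} (hU : Uᴴ * U = 1) :
    (U * D * Uᴴ) * (U * E * Uᴴ) = U * (D * E) * Uᴴ := by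
  calc (U * D * Uᴴ) * (U * E * Uᴴ) = U * (D * ((Uᴴ * U) * (E * Uᴴ))) := by
        simp only [Matrix.mul_assoc]
    _ = U * (D * E) * Uᴴ := by rw [hU, Matrix.one_mul]; simp only [Matrix.mul_assoc]

end Spectral

section MapC

theorem mapC_mul (A B : Matrix ι ι ℝ) :
    (A * B).map (fun x => (x : ℂ)) = A.map (fun x => (x : ℂ)) * B.map (fun x => (x : ℂ)) := by
  rw [show (fun x : ℝ => (x : ℂ)) = ⇑Complex.ofRealHom from rfl, Matrix.map_mul]

theorem mapC_one : (1 : Matrix ι ι ℝ).map (fun x => (x : ℂ)) = 1 :=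
  Matrix.map_one _ (by simp) (by simp)

theorem mapC_sub (A B : Matrix ι ι ℝ) :
    (A - B).map (fun x => (x : ℂ)) = A.map (fun x => (x : ℂ)) - B.map (fun x => (x : ℂ)) := by
  ext i j
  simp [Matrix.map_apply, Matrix.sub_apply]

theorem mapC_neg (A : Matrix ι ι ℝ) :
    (-A).map (fun x => (x : ℂ)) = -(A.map (fun x => (x : ℂ))) := by
  ext i j
  simp [Matrix.map_apply]

theorem mapC_conjTranspose (A : Matrix ι ι ℝ) :
    (A.map (fun x => (x : ℂ)))ᴴ = Aᵀ.map (fun x => (x : ℂ)) := by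
  ext i j
  simp [Matrix.conjTranspose_apply, Matrix.map_apply, Matrix.transpose_apply,
    Complex.conj_ofReal]

theorem posDef_map_iff {A : Matrix ι ι ℝ} (hA : A.IsHermitian) :
    (A.map (fun x => (x : ℂ))).PosDef ↔ A.PosDef := by
  set U := (hA.eigenvectorUnitary : Matrix ι ι ℝ) with hUdef
  have hU : U * Uᴴ = 1 := by
    rw [← Matrix.star_eq_conjTranspose]
    exact Matrix.mem_unitaryGroup_iff.mp hA.eigenvectorUnitary.2
  have hspec : A = U * Matrix.diagonal hA.eigenvalues * Uᴴ := by
    have := hA.spectral_theorem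
    rw [← Matrix.star_eq_conjTranspose]
    simpa [Function.comp] using this
  have hUt : Uᴴ = Uᵀ := Matrix.conjTranspose_eq_transpose_of_trivial U
  have hUc : U.map (fun x => (x : ℂ)) * (U.map (fun x => (x : ℂ)))ᴴ = 1 := by
    rw [mapC_conjTranspose, ← mapC_mul, ← hUt, hU, mapC_one]
  have hmapA : A.map (fun x => (x : ℂ)) = U.map (fun x => (x : ℂ)) *
      Matrix.diagonal (fun i => ((hA.eigenvalues i : ℝ) : ℂ)) * (U.map (fun x => (x : ℂ)))ᴴ := by
    rw [mapC_conjTranspose, ← hUt]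
    conv_lhs => rw [hspec]
    rw [mapC_mul, mapC_mul]
    congr 1
    rw [Matrix.diagonal_map (by simp)]
  rw [hmapA, conj_diag_posDef_iff hUc]
  conv_rhs => rw [hspec]
  rw [conj_diag_posDef_iff hU]
  simp [Complex.zero_lt_real]

end MapC
theorem one_sub_unitary_diag {𝕜 : Type*} [RCLike 𝕜] {U : Matrix ι ι 𝕜} (hU : U * Uᴴ = 1)
    (d : ι → 𝕜) : (1 : Matrix ι ι 𝕜) - U * Matrix.diagonal d * Uᴴ
      = U * Matrix.diagonal (fun i => 1 - d i) * Uᴴ := by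
  rw [one_sub_conj hU, ← Matrix.diagonal_one, Matrix.diagonal_sub]

theorem one_add_unitary_diag {𝕜 : Type*} [RCLike 𝕜] {U : Matrix ι ι 𝕜} (hU : U * Uᴴ = 1)
    (d : ι → 𝕜) : (1 : Matrix ι ι 𝕜) + U * Matrix.diagonal d * Uᴴ
      = U * Matrix.diagonal (fun i => 1 + d i) * Uᴴ := by
  rw [one_add_conj hU, ← Matrix.diagonal_one, Matrix.diagonal_add]

theorem unitary_diag_mul {𝕜 : Type*} [RCLike 𝕜] {U : Matrix ι ι 𝕜} (hU : Uᴴ * U = 1)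
    (d e : ι → 𝕜) : (U * Matrix.diagonal d * Uᴴ) * (U * Matrix.diagonal e * Uᴴ)
      = U * Matrix.diagonal (fun i => d i * e i) * Uᴴ := by
  rw [conj_mul_conj hU, Matrix.diagonal_mul_diagonal]

theorem omega_2x2_transpose : (!![(0:ℝ), 1; -1, 0])ᵀ = -(!![(0:ℝ), 1; -1, 0]) := by
  ext i j
  rw [Matrix.transpose_apply, Matrix.neg_apply]
  fin_cases i <;> fin_cases j <;> simp

theorem omega_transpose (n : ℕ) : (Omega n)ᵀ = -Omega n := by
  rw [Omega, Matrix.blockDiagonal_transpose]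
  simp only [omega_2x2_transpose]
  rw [show (fun (_ : Fin n) => -(!![(0:ℝ), 1; -1, 0]))
      = -(fun (_ : Fin n) => (!![(0:ℝ), 1; -1, 0])) from rfl, Matrix.blockDiagonal_neg]

theorem omega_2x2_mul : (!![(0:ℝ), 1; -1, 0]) * (!![(0:ℝ), 1; -1, 0])ᵀ = 1 := by
  rw [omega_2x2_transpose]
  ext i j
  rw [Matrix.mul_neg, Matrix.neg_apply]
  fin_cases i <;> fin_cases j <;>
    simp [Matrix.mul_apply, Fin.sum_univ_two, Matrix.one_apply]

theorem omega_mul_transpose (n : ℕ) : Omega n * (Omega n)ᵀ = 1 := by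
  rw [Omega, Matrix.blockDiagonal_transpose, ← Matrix.blockDiagonal_mul,
    ← Matrix.blockDiagonal_one]
  simp only [omega_2x2_mul]
  rfl

theorem omega_transpose_mul (n : ℕ) : (Omega n)ᵀ * Omega n = 1 := by
  have h1 := omega_mul_transpose n
  have h2 := omega_transpose n
  rw [h2] at h1 ⊢
  rw [Matrix.neg_mul]
  rw [Matrix.mul_neg] at h1
  have : Omega n * Omega n = -1 := by
    have := congrArg Neg.neg h1
    simpa using this
  rw [this, neg_neg]

/-- **Properties of `γ_K^# := K # (Ω K⁻¹ Ωᵀ)`.** For a `2n × 2n` real symmetric positive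
definite `K`: (i) `γ_K^# = S Sᵀ` for some symplectic `S` (so `γ_K^#` is a pure quantum
covariance matrix); (ii) `K − iΩ` positive definite, `K − Ω K⁻¹ Ωᵀ` positive definite and
`K − γ_K^#` positive definite are equivalent conditions. -/
theorem geomMean_pure_qcm (n : ℕ)
    (K : Matrix (Fin 2 × Fin n) (Fin 2 × Fin n) ℝ) (hK : K.PosDef) :
    (∃ S : Matrix (Fin 2 × Fin n) (Fin 2 × Fin n) ℝ,
        S * Omega n * Sᵀ = Omega n ∧ geomMean K (Omega n * K⁻¹ * (Omega n)ᵀ) = S * Sᵀ)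
    ∧ ((K.map (fun x => (x : ℂ)) - Complex.I • (Omega n).map (fun x => (x : ℂ))).PosDef
        ↔ (K - Omega n * K⁻¹ * (Omega n)ᵀ).PosDef)
    ∧ ((K - Omega n * K⁻¹ * (Omega n)ᵀ).PosDef
        ↔ (K - geomMean K (Omega n * K⁻¹ * (Omega n)ᵀ)).PosDef) := by
  obtain ⟨Om, hOmdef⟩ : ∃ Om, Om = Omega n := ⟨_, rfl⟩
  rw [← hOmdef]
  have hOmT : Omᵀ = -Om := hOmdef ▸ omega_transpose n
  have hOm1 : Om * Omᵀ = 1 := hOmdef ▸ omega_mul_transpose n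
  have hOmT1 : Omᵀ * Om = 1 := hOmdef ▸ omega_transpose_mul n
  have hOmUnit : IsUnit Om := matIsUnit hOm1
  obtain ⟨M, hMdef⟩ : ∃ M, M = Om * K⁻¹ * Omᵀ := ⟨_, rfl⟩
  rw [← hMdef]
  have hOmH : Omᴴ = Omᵀ := Matrix.conjTranspose_eq_transpose_of_trivial Om
  have hKinv : K⁻¹.PosDef := hK.inv
  have hMpd : M.PosDef := by
    rw [hMdef, ← hOmH]
    exact myPosDefConj hKinv hOmUnit
  obtain ⟨R, hRdef⟩ : ∃ R, R = rpowMat K (1/2) := ⟨_, rfl⟩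
  obtain ⟨Ri, hRidef⟩ : ∃ Ri, Ri = rpowMat K (-(1/2)) := ⟨_, rfl⟩
  have hRRi : R * Ri = 1 := by rw [hRdef, hRidef]; exact rpowMat_mul_neg hK _
  have hRiR : Ri * R = 1 := by
    rw [hRidef, hRdef, rpowMat_mul hK]; norm_num; exact rpowMat_zero hK.1
  have hRR : R * R = K := by rw [hRdef]; exact rpowMat_half_mul_self hK
  have hRisymH : Riᴴ = Ri := by rw [hRidef]; exact (rpowMat_isHermitian hK.1 _).eq
  have hRsymH : Rᴴ = R := by rw [hRdef]; exact (rpowMat_isHermitian hK.1 _).eq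
  have hRit : Riᵀ = Ri := by
    rw [← Matrix.conjTranspose_eq_transpose_of_trivial]; exact hRisymH
  have hRiRi : Ri * Ri = K⁻¹ := by
    refine (Matrix.inv_eq_right_inv ?_).symm
    rw [← hRR]
    calc R * R * (Ri * Ri) = R * ((R * Ri) * Ri) := by simp only [Matrix.mul_assoc]
      _ = 1 := by rw [hRRi, Matrix.one_mul, hRRi]
  have hRunit : IsUnit R := matIsUnit hRRi
  have hRiunit : IsUnit Ri := matIsUnit hRiR
  obtain ⟨W, hWdef⟩ : ∃ W, W = Ri * M * Ri := ⟨_, rfl⟩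
  have hWpd : W.PosDef := by
    have h : Ri * M * Riᴴ = W := by rw [hRisymH, ← hWdef]
    rw [← h]
    exact myPosDefConj hMpd hRiunit
  obtain ⟨T, hTdef⟩ : ∃ T, T = rpowMat W (1/2) := ⟨_, rfl⟩
  have hgm : geomMean K M = R * T * R := by
    rw [hTdef, hWdef, hRdef, hRidef]
    unfold geomMean
    norm_num
  -- Part (i)
  have parti : ∃ S : Matrix (Fin 2 × Fin n) (Fin 2 × Fin n) ℝ,
      S * Om * Sᵀ = Om ∧ geomMean K M = S * Sᵀ := by
    have hGpd : (geomMean K M).PosDef := geomMean_posDef hK hMpd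
    have hric : geomMean K M * K⁻¹ * geomMean K M = M := geomMean_riccati hK hMpd
    obtain ⟨G, hGdef⟩ : ∃ G, G = geomMean K M := ⟨_, rfl⟩
    rw [← hGdef] at hGpd hric ⊢
    have hGdet : IsUnit G.det := (Matrix.isUnit_iff_isUnit_det G).mp hGpd.isUnit
    have hGiG : G⁻¹ * G = 1 := Matrix.nonsing_inv_mul _ hGdet
    have hGGi : G * G⁻¹ = 1 := Matrix.mul_nonsing_inv _ hGdet
    have hGinv : G⁻¹.PosDef := hGpd.inv
    have hOmGiOm_pd : (Om * G⁻¹ * Omᵀ).PosDef := by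
      rw [← hOmH]; exact myPosDefConj hGinv hOmUnit
    have hGiMGi : G⁻¹ * M * G⁻¹ = K⁻¹ := by
      rw [← hric]
      calc G⁻¹ * (G * K⁻¹ * G) * G⁻¹ = (G⁻¹ * G) * K⁻¹ * (G * G⁻¹) := by
            simp only [Matrix.mul_assoc]
        _ = K⁻¹ := by rw [hGiG, hGGi, Matrix.one_mul, Matrix.mul_one]
    have hOmTKiOm : Omᵀ * K⁻¹ * Om = M := by
      rw [hMdef, hOmT]
      simp only [Matrix.neg_mul, Matrix.mul_neg, neg_neg]
    have hXric : (Om * G⁻¹ * Omᵀ) * K⁻¹ * (Om * G⁻¹ * Omᵀ) = M := by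
      calc (Om * G⁻¹ * Omᵀ) * K⁻¹ * (Om * G⁻¹ * Omᵀ)
          = Om * (G⁻¹ * ((Omᵀ * K⁻¹ * Om) * (G⁻¹ * Omᵀ))) := by simp only [Matrix.mul_assoc]
        _ = Om * (G⁻¹ * (M * (G⁻¹ * Omᵀ))) := by rw [hOmTKiOm]
        _ = Om * (G⁻¹ * M * G⁻¹) * Omᵀ := by simp only [Matrix.mul_assoc]
        _ = Om * K⁻¹ * Omᵀ := by rw [hGiMGi]
        _ = M := hMdef.symm
    have hfix : Om * G⁻¹ * Omᵀ = G := by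
      have h := geomMean_unique hK hMpd hOmGiOm_pd hXric
      rw [← hGdef] at h; exact h
    have hconj : Om * G * Omᵀ = G⁻¹ := by
      have h1 : Omᵀ * (Om * G⁻¹ * Omᵀ) * Om = Omᵀ * G * Om := by rw [hfix]
      have h2 : Omᵀ * (Om * G⁻¹ * Omᵀ) * Om = G⁻¹ := by
        calc Omᵀ * (Om * G⁻¹ * Omᵀ) * Om = (Omᵀ * Om) * G⁻¹ * (Omᵀ * Om) := by
              simp only [Matrix.mul_assoc]
          _ = G⁻¹ := by rw [hOmT1, Matrix.one_mul, Matrix.mul_one]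
      have h3 : Omᵀ * G * Om = Om * G * Omᵀ := by
        rw [hOmT]
        simp only [Matrix.neg_mul, Matrix.mul_neg, neg_neg]
      rw [← h3, ← h1, h2]
    obtain ⟨S, hSdef⟩ : ∃ S, S = rpowMat G (1/2) := ⟨_, rfl⟩
    have hSpd : S.PosDef := by rw [hSdef]; exact rpowMat_posDef hGpd _
    have hSS : S * S = G := by rw [hSdef]; exact rpowMat_half_mul_self hGpd
    have hST : Sᵀ = S := by
      rw [← Matrix.conjTranspose_eq_transpose_of_trivial, hSdef]
      exact (rpowMat_isHermitian hGpd.1 _).eq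
    have hSdet : IsUnit S.det := (Matrix.isUnit_iff_isUnit_det S).mp hSpd.isUnit
    have hP2 : (Om * S * Omᵀ) * (Om * S * Omᵀ) = G⁻¹ := by
      calc (Om * S * Omᵀ) * (Om * S * Omᵀ)
          = Om * (S * ((Omᵀ * Om) * (S * Omᵀ))) := by simp only [Matrix.mul_assoc]
        _ = Om * (S * S) * Omᵀ := by
            rw [hOmT1, Matrix.one_mul]; simp only [Matrix.mul_assoc]
        _ = G⁻¹ := by rw [hSS, hconj]
    have hQ2 : S⁻¹ * S⁻¹ = G⁻¹ := by rw [← hSS, Matrix.mul_inv_rev]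
    have hPpd : (Om * S * Omᵀ).PosDef := by rw [← hOmH]; exact myPosDefConj hSpd hOmUnit
    have hPQ : Om * S * Omᵀ = S⁻¹ :=
      open scoped MatrixOrder in (CFC.sq_eq_sq_iff _ _ hPpd.posSemidef.nonneg hSpd.inv.posSemidef.nonneg).mp (by rw [pow_two, pow_two, hP2, hQ2])
    refine ⟨S, ?_, ?_⟩
    · rw [hST]
      calc S * Om * S = S * Om * S * (Omᵀ * Om) := by rw [hOmT1, Matrix.mul_one]
        _ = S * (Om * S * Omᵀ) * Om := by simp only [Matrix.mul_assoc]
        _ = S * S⁻¹ * Om := by rw [hPQ]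
        _ = Om := by rw [Matrix.mul_nonsing_inv _ hSdet, Matrix.one_mul]
    · rw [hST, hSS]
  -- congruence relating K - M and 1 - W, K - geomMean and 1 - T
  have hKsubM : K - M = R * (1 - W) * R := by
    have hRWR : R * W * R = M := by
      calc R * W * R = (R * Ri) * M * (Ri * R) := by
            rw [hWdef]; simp only [Matrix.mul_assoc]
        _ = M := by rw [hRRi, hRiR, Matrix.one_mul, Matrix.mul_one]
    rw [Matrix.mul_sub, Matrix.sub_mul, Matrix.mul_one, hRR, hRWR]
  have hKsubG : K - geomMean K M = R * (1 - T) * R := by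
    rw [hgm, Matrix.mul_sub, Matrix.sub_mul, Matrix.mul_one, hRR]
  have h1W : (K - M).PosDef ↔ (1 - W).PosDef := by
    rw [hKsubM]
    rw [show R * (1 - W) * R = R * (1 - W) * Rᴴ by rw [hRsymH]]
    exact myPosDefConj_iff hRunit
  have h1T : (K - geomMean K M).PosDef ↔ (1 - T).PosDef := by
    rw [hKsubG]
    rw [show R * (1 - T) * R = R * (1 - T) * Rᴴ by rw [hRsymH]]
    exact myPosDefConj_iff hRunit
  -- Part (ii)(b)
  have partb : (K - M).PosDef ↔ (K - geomMean K M).PosDef := by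
    obtain ⟨V, hVdef⟩ : ∃ V,
        V = (hWpd.1.eigenvectorUnitary : Matrix (Fin 2 × Fin n) (Fin 2 × Fin n) ℝ) := ⟨_, rfl⟩
    obtain ⟨lam, hlamdef⟩ : ∃ lam, lam = hWpd.1.eigenvalues := ⟨_, rfl⟩
    have hV1 : V * Vᴴ = 1 := by
      rw [hVdef, ← Matrix.star_eq_conjTranspose]
      exact Matrix.mem_unitaryGroup_iff.mp hWpd.1.eigenvectorUnitary.2
    have hWspec : W = V * Matrix.diagonal lam * Vᴴ := by
      rw [hVdef, hlamdef, ← Matrix.star_eq_conjTranspose]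
      exact hWpd.1.spectral_theorem.trans (by simp [Function.comp])
    have hTspec : T = V * Matrix.diagonal (fun i => lam i ^ ((1:ℝ)/2)) * Vᴴ := by
      rw [hTdef, hVdef, hlamdef, ← Matrix.star_eq_conjTranspose]
      exact rpowMat_eq hWpd.1 _
    have hlampos : ∀ i, 0 < lam i := by rw [hlamdef]; exact fun i => hWpd.eigenvalues_pos i
    have hiW : (1 - W).PosDef ↔ ∀ i, 0 < 1 - lam i := by
      rw [hWspec, one_sub_unitary_diag hV1, conj_diag_posDef_iff hV1]
    have hiT : (1 - T).PosDef ↔ ∀ i, 0 < 1 - lam i ^ ((1:ℝ)/2) := by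
      rw [hTspec, one_sub_unitary_diag hV1, conj_diag_posDef_iff hV1]
    rw [h1W, h1T, hiW, hiT]
    have key : ∀ x : ℝ, 0 < x → (x ^ ((1:ℝ)/2) < 1 ↔ x < 1) := fun x hx => by
      rw [Real.rpow_lt_one_iff_of_pos hx]
      norm_num
    constructor
    · intro h i
      have := (key (lam i) (hlampos i)).mpr (by linarith [h i])
      linarith
    · intro h i
      have := (key (lam i) (hlampos i)).mp (by linarith [h i])
      linarith
  -- Part (ii)(a)
  have parta : (K.map (fun x => (x : ℂ)) - Complex.I • Om.map (fun x => (x : ℂ))).PosDef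
      ↔ (K - M).PosDef := by
    obtain ⟨Bm, hBmdef⟩ : ∃ Bm, Bm = Ri * Om * Ri := ⟨_, rfl⟩
    have hBmT : Bmᵀ = -Bm := by
      rw [hBmdef, Matrix.transpose_mul, Matrix.transpose_mul, hRit, hOmT]
      simp only [Matrix.neg_mul, Matrix.mul_neg, Matrix.mul_assoc]
    have hBB : Bm * Bm = -W := by
      have h1 : Bm * Bm = Ri * (Om * ((Ri * Ri) * (Om * Ri))) := by
        rw [hBmdef]; simp only [Matrix.mul_assoc]
      rw [h1, hRiRi]
      have h2 : -W = Ri * (Om * (K⁻¹ * (Om * Ri))) := by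
        rw [hWdef, hMdef, hOmT]
        simp only [Matrix.mul_neg, Matrix.neg_mul, neg_neg, Matrix.mul_assoc]
      rw [h2]
    obtain ⟨Nc, hNcdef⟩ : ∃ Nc, Nc = Ri.map (fun x => (x : ℂ)) := ⟨_, rfl⟩
    have hNcH : Ncᴴ = Nc := by rw [hNcdef, mapC_conjTranspose, hRit]
    have hNcUnit : IsUnit Nc := by
      refine matIsUnit (B := R.map (fun x => (x : ℂ))) ?_
      rw [hNcdef, ← mapC_mul, hRiR, mapC_one]
    have hRiKRi : Ri * K * Ri = 1 := by
      rw [← hRR]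
      calc Ri * (R * R) * Ri = (Ri * R) * (R * Ri) := by simp only [Matrix.mul_assoc]
        _ = 1 := by rw [hRiR, hRRi, Matrix.one_mul]
    obtain ⟨Cm, hCmdef⟩ : ∃ Cm, Cm = Complex.I • (Bm.map (fun x => (x : ℂ))) := ⟨_, rfl⟩
    have hconjA : Nc * (K.map (fun x => (x : ℂ)) - Complex.I • Om.map (fun x => (x : ℂ))) * Ncᴴ
        = 1 - Cm := by
      rw [hNcH, Matrix.mul_sub, Matrix.sub_mul]
      congr 1
      · rw [hNcdef, ← mapC_mul, ← mapC_mul, hRiKRi, mapC_one]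
      · rw [hNcdef, Matrix.mul_smul, Matrix.smul_mul, ← mapC_mul, ← mapC_mul, ← hBmdef, hCmdef]
    have stepA : (K.map (fun x => (x : ℂ))
        - Complex.I • Om.map (fun x => (x : ℂ))).PosDef ↔ (1 - Cm).PosDef := by
      rw [← myPosDefConj_iff
        (A := K.map (fun x => (x : ℂ)) - Complex.I • Om.map (fun x => (x : ℂ))) hNcUnit, hconjA]
    have hBcH : (Bm.map (fun x => (x : ℂ)))ᴴ = -(Bm.map (fun x => (x : ℂ))) := by
      rw [mapC_conjTranspose, hBmT, mapC_neg]
    have hCmH : Cm.IsHermitian := by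
      show Cmᴴ = Cm
      rw [hCmdef, Matrix.conjTranspose_smul, hBcH]
      simp [Complex.conj_I]
    have hCmT : Cmᵀ = -Cm := by
      rw [hCmdef, Matrix.transpose_smul, ← Matrix.transpose_map, hBmT, mapC_neg, smul_neg]
    have hCC : Cm * Cm = W.map (fun x => (x : ℂ)) := by
      rw [hCmdef, Matrix.smul_mul, Matrix.mul_smul, smul_smul, Complex.I_mul_I,
        ← mapC_mul, hBB, mapC_neg]
      simp
    obtain ⟨Uc, hUcdef⟩ : ∃ Uc,
        Uc = (hCmH.eigenvectorUnitary : Matrix (Fin 2 × Fin n) (Fin 2 × Fin n) ℂ) := ⟨_, rfl⟩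
    obtain ⟨mu, hmudef⟩ : ∃ mu, mu = hCmH.eigenvalues := ⟨_, rfl⟩
    have hUc1 : Uc * Ucᴴ = 1 := by
      rw [hUcdef, ← Matrix.star_eq_conjTranspose]
      exact Matrix.mem_unitaryGroup_iff.mp hCmH.eigenvectorUnitary.2
    have hUc1' : Ucᴴ * Uc = 1 := by
      rw [hUcdef, ← Matrix.star_eq_conjTranspose]
      exact Matrix.mem_unitaryGroup_iff'.mp hCmH.eigenvectorUnitary.2
    have hCspec : Cm = Uc * Matrix.diagonal (fun i => ((mu i : ℝ) : ℂ)) * Ucᴴ := by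
      rw [hUcdef, hmudef, ← Matrix.star_eq_conjTranspose]
      exact hCmH.spectral_theorem.trans (by simp [Function.comp_def])
    have e1 : (1 : Matrix (Fin 2 × Fin n) (Fin 2 × Fin n) ℂ) - Cm
        = Uc * Matrix.diagonal (fun i => ((1 - mu i : ℝ) : ℂ)) * Ucᴴ := by
      conv_lhs => rw [hCspec]
      rw [one_sub_unitary_diag hUc1]
      congr 2
      funext i
      push_cast
      ring
    have e2 : (1 : Matrix (Fin 2 × Fin n) (Fin 2 × Fin n) ℂ) + Cm
        = Uc * Matrix.diagonal (fun i => ((1 + mu i : ℝ) : ℂ)) * Ucᴴ := by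
      conv_lhs => rw [hCspec]
      rw [one_add_unitary_diag hUc1]
      congr 2
      funext i
      push_cast
      ring
    have e3 : (1 : Matrix (Fin 2 × Fin n) (Fin 2 × Fin n) ℂ) - Cm * Cm
        = Uc * Matrix.diagonal (fun i => ((1 - mu i * mu i : ℝ) : ℂ)) * Ucᴴ := by
      conv_lhs => rw [hCspec]
      rw [unitary_diag_mul hUc1', one_sub_unitary_diag hUc1]
      congr 2
      funext i
      push_cast
      ring
    have pd1 : ((1 : Matrix (Fin 2 × Fin n) (Fin 2 × Fin n) ℂ) - Cm).PosDef
        ↔ ∀ i, mu i < 1 := by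
      rw [e1, conj_diag_posDef_iff hUc1]
      simp only [Complex.zero_lt_real, sub_pos]
    have pd2 : ((1 : Matrix (Fin 2 × Fin n) (Fin 2 × Fin n) ℂ) + Cm).PosDef
        ↔ ∀ i, -1 < mu i := by
      rw [e2, conj_diag_posDef_iff hUc1]
      constructor <;> intro h i <;> have := h i <;>
        simp only [Complex.zero_lt_real] at * <;> linarith
    have pd3 : ((1 : Matrix (Fin 2 × Fin n) (Fin 2 × Fin n) ℂ) - Cm * Cm).PosDef
        ↔ ∀ i, mu i * mu i < 1 := by
      rw [e3, conj_diag_posDef_iff hUc1]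
      simp only [Complex.zero_lt_real, sub_pos]
    have hmapsub : (1 : Matrix (Fin 2 × Fin n) (Fin 2 × Fin n) ℂ) - W.map (fun x => (x : ℂ))
        = (1 - W).map (fun x => (x : ℂ)) := by
      rw [mapC_sub, mapC_one]
    have h1Wherm : ((1 : Matrix (Fin 2 × Fin n) (Fin 2 × Fin n) ℝ) - W).IsHermitian := by
      show _ᴴ = _
      rw [Matrix.conjTranspose_sub, Matrix.conjTranspose_one, hWpd.1.eq]
    have stepB : ((1 : Matrix (Fin 2 × Fin n) (Fin 2 × Fin n) ℂ) - Cm).PosDef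
        ↔ ((1 : Matrix (Fin 2 × Fin n) (Fin 2 × Fin n) ℝ) - W).PosDef := by
      constructor
      · intro h
        have h2 : ((1 : Matrix (Fin 2 × Fin n) (Fin 2 × Fin n) ℂ) + Cm).PosDef := by
          have ht := h.transpose
          rwa [Matrix.transpose_sub, Matrix.transpose_one, hCmT, sub_neg_eq_add] at ht
        have h3 : ((1 : Matrix (Fin 2 × Fin n) (Fin 2 × Fin n) ℂ) - Cm * Cm).PosDef :=
          pd3.mpr (fun i => by nlinarith [pd1.mp h i, pd2.mp h2 i])
        rw [hCC, hmapsub] at h3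
        exact (posDef_map_iff h1Wherm).mp h3
      · intro h
        apply pd1.mpr
        intro i
        have h3 : ((1 : Matrix (Fin 2 × Fin n) (Fin 2 × Fin n) ℂ) - Cm * Cm).PosDef := by
          rw [hCC, hmapsub]
          exact (posDef_map_iff h1Wherm).mpr h
        have := pd3.mp h3 i
        nlinarith
    exact stepA.trans (stepB.trans h1W.symm)
  exact ⟨parti, parta, partb⟩
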